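/- Let r ≥ 1 be an integer, let f : ℕ → ℂ, and let z ∈ ℂ be such that the series ∑_{n≥0} |f_n| |z|^n converges. Then ∑_{n≥0} f_n z^n / (n+1)^r = ((-1)^{r-1} / (r-1)!) ∫_{0}^{1} (log t)^{r-1} · F(t z) dt, where F(w) = ∑_{n≥0} f_n w^n and log denotes the real natural logarithm. -/

import Mathlib

open MeasureTheory intervalIntegral
open Set Real


-- Step 1: integral of u^k * exp(-c u) over Ioi 0
lemma aux_integral (k : ℕ) {c : ℝ} (hc : 0 < c) :
    ∫ u in Ioi (0:ℝ), u ^ k * Real.exp (-(c * u)) = k.factorial / c ^ (k + 1) := by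
  have h := integral_rpow_mul_exp_neg_mul_rpow (p := 1) (q := (k : ℝ)) (b := c)
    one_pos (lt_of_lt_of_le neg_one_lt_zero (Nat.cast_nonneg k)) hc
  simp only [Real.rpow_one, Real.rpow_natCast, div_one, one_div, one_mul, neg_mul] at h
  rw [h]
  rw [Real.Gamma_nat_eq_factorial k]
  rw [show -((k:ℝ)+1) = -(((k+1:ℕ)):ℝ) by push_cast; ring, Real.rpow_neg hc.le,
    Real.rpow_natCast]
  ring

lemma aux_integrable (k : ℕ) {c : ℝ} (hc : 0 < c) :
    IntegrableOn (fun u : ℝ => u ^ k * Real.exp (-(c * u))) (Ioi 0) := by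
  have h := Real.GammaIntegral_convergent (s := (k:ℝ)+1) (by positivity)
  have h2 : IntegrableOn (fun u : ℝ => Real.exp (-(c*u)) * (c*u) ^ ((k:ℝ)+1-1)) (Ioi 0) := by
    have := (integrableOn_Ioi_comp_mul_left_iff
      (fun x : ℝ => Real.exp (-x) * x ^ ((k:ℝ)+1-1)) 0 hc).mpr (by simpa using h)
    simpa using this
  have h3 : IntegrableOn (fun u : ℝ => (c ^ k)⁻¹ * (Real.exp (-(c*u)) * (c*u) ^ ((k:ℝ)+1-1)))
      (Ioi 0) := h2.const_mul _
  refine h3.congr_fun (fun x hx => ?_) measurableSet_Ioi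
  have hx0 : (0:ℝ) < x := hx
  beta_reduce
  rw [add_sub_cancel_right, Real.rpow_natCast, mul_pow]
  field_simp

lemma exp_neg_deriv : ∀ x ∈ Ioi (0:ℝ),
    HasDerivWithinAt (fun u : ℝ => Real.exp (-u)) (-Real.exp (-x)) (Ioi 0) x :=
  fun x _ => mul_neg_one (Real.exp (-x)) ▸
    ((Real.hasDerivAt_exp (-x)).comp x (hasDerivAt_neg x)).hasDerivWithinAt

lemma exp_neg_injOn : (Ioi (0:ℝ)).InjOn (fun u : ℝ => Real.exp (-u)) :=
  (Real.exp_injective.comp neg_injective).injOn.mono (Set.subset_univ _)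

lemma exp_neg_image : (fun u : ℝ => Real.exp (-u)) '' Ioi 0 = Ioo (0:ℝ) 1 := by
  ext y
  simp only [Set.mem_image, Set.mem_Ioi, Set.mem_Ioo]
  constructor
  · rintro ⟨u, hu, rfl⟩
    exact ⟨Real.exp_pos _, by rw [Real.exp_lt_one_iff]; linarith⟩
  · rintro ⟨h0, h1⟩
    exact ⟨-Real.log y, by simpa using Real.log_neg h0 h1, by
      rw [neg_neg, Real.exp_log h0]⟩

lemma transf_eq (n k : ℕ) (u : ℝ) :
    |(-Real.exp (-u))| • ((Real.exp (-u)) ^ n * (-Real.log (Real.exp (-u))) ^ k)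
      = u ^ k * Real.exp (-(((n:ℝ)+1) * u)) := by
  rw [Real.log_exp, neg_neg, abs_neg, abs_of_pos (Real.exp_pos _), smul_eq_mul,
    ← Real.exp_nat_mul]
  rw [show Real.exp (-u) * (Real.exp ((n:ℝ) * -u) * u ^ k)
      = u ^ k * (Real.exp (-u) * Real.exp ((n:ℝ) * -u)) by ring, ← Real.exp_add]
  congr 2
  ring

lemma key_integral (n k : ℕ) :
    ∫ t in Ioo (0:ℝ) 1, t ^ n * (-Real.log t) ^ k
      = k.factorial / ((n:ℝ) + 1) ^ (k + 1) := by
  rw [← exp_neg_image, integral_image_eq_integral_abs_deriv_smul measurableSet_Ioi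
    exp_neg_deriv exp_neg_injOn]
  simp_rw [transf_eq]
  exact aux_integral k (by positivity)

lemma key_integrable (n k : ℕ) :
    IntegrableOn (fun t : ℝ => t ^ n * (-Real.log t) ^ k) (Ioo (0:ℝ) 1) := by
  rw [← exp_neg_image, integrableOn_image_iff_integrableOn_abs_deriv_smul measurableSet_Ioi
    exp_neg_deriv exp_neg_injOn]
  have := aux_integrable k (c := (n:ℝ)+1) (by positivity)
  exact this.congr_fun (fun u _ => (transf_eq n k u).symm) measurableSet_Ioi

/-- For an integer `r ≥ 1`: if `∑ ‖f n‖ ‖z‖^n` converges, then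
`∑_{n≥0} f_n z^n/(n+1)^r = ((-1)^(r-1)/(r-1)!) ∫_0^1 (log t)^(r-1) F(t z) dt`,
where `F(w) = ∑_{n≥0} f_n w^n`. -/
theorem polylog_like_integral_formula (r : ℕ) (hr : 1 ≤ r) (f : ℕ → ℂ) (z : ℂ)
    (hsum : Summable (fun n : ℕ => ‖f n‖ * ‖z‖ ^ n)) :
    ∑' n : ℕ, f n * z ^ n / ((n : ℂ) + 1) ^ r =
      ((-1 : ℂ) ^ (r - 1) / ((r - 1).factorial : ℂ)) *
        ∫ t in (0 : ℝ)..1,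
          ((Real.log t : ℂ)) ^ (r - 1) * ∑' n : ℕ, f n * ((t : ℂ) * z) ^ n := by
  set k := r - 1 with hk
  have hrk : r = k + 1 := (Nat.succ_pred_eq_of_pos hr).symm
  set G : ℕ → ℝ → ℂ := fun n t => ((Real.log t : ℂ)) ^ k * (f n * ((t : ℂ) * z) ^ n) with hG
  -- integrability of each G n on Ioo 0 1
  have hGmeas : ∀ n, AEStronglyMeasurable (G n) (volume.restrict (Set.Ioo 0 1)) := by
    intro n
    apply Measurable.aestronglyMeasurable
    exact ((Complex.measurable_ofReal.comp Real.measurable_log).pow_const k).mul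
      (((Complex.measurable_ofReal.mul_const z).pow_const n).const_mul (f n))
  have hGnorm : ∀ n, ∀ t ∈ Set.Ioo (0:ℝ) 1,
      ‖G n t‖ = (‖f n‖ * ‖z‖ ^ n) * (t ^ n * (-Real.log t) ^ k) := by
    intro n t ht
    have hlog : Real.log t < 0 := Real.log_neg ht.1 ht.2
    have h1 : ‖((t:ℂ) * z)‖ = t * ‖z‖ := by
      rw [norm_mul, Complex.norm_real, Real.norm_eq_abs, abs_of_pos ht.1]
    simp only [hG, norm_mul, norm_pow, Complex.norm_real, Real.norm_eq_abs,
      abs_of_neg hlog, abs_of_pos ht.1, h1, mul_pow]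
    ring
  have hGint : ∀ n, IntegrableOn (G n) (Set.Ioo (0:ℝ) 1) := by
    intro n
    refine Integrable.mono' (((key_integrable n k).const_mul (‖f n‖ * ‖z‖ ^ n))) (hGmeas n) ?_
    rw [ae_restrict_iff' measurableSet_Ioo]
    filter_upwards with t ht
    rw [hGnorm n t ht]
  have hGnormint : ∀ n, ∫ t in Set.Ioo (0:ℝ) 1, ‖G n t‖
      = (‖f n‖ * ‖z‖ ^ n) * ((k.factorial : ℝ) / ((n:ℝ) + 1) ^ (k + 1)) := by
    intro n
    rw [setIntegral_congr_fun measurableSet_Ioo (fun t ht => hGnorm n t ht),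
      MeasureTheory.integral_const_mul, key_integral n k]
  have hGsum : Summable fun n => ∫ t in Set.Ioo (0:ℝ) 1, ‖G n t‖ := by
    apply Summable.of_nonneg_of_le
      (fun n => integral_nonneg (fun t => norm_nonneg _))
      (fun n => ?_) (hsum.mul_left (k.factorial : ℝ))
    rw [hGnormint n]
    rw [mul_comm ((k.factorial : ℝ)) _]
    apply mul_le_mul_of_nonneg_left _ (by positivity)
    apply div_le_self (by positivity)
    apply one_le_pow₀
    simp [le_add_iff_nonneg_left]
  -- value of each ∫ G n
  have hGval : ∀ n, ∫ t in Set.Ioo (0:ℝ) 1, G n t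
      = f n * z ^ n * (((-1 : ℝ) ^ k * ((k.factorial : ℝ) / ((n:ℝ) + 1) ^ (k + 1)) : ℝ) : ℂ) := by
    intro n
    have h1 : ∀ t ∈ Set.Ioo (0:ℝ) 1,
        G n t = (f n * z ^ n) * ((((-1 : ℝ) ^ k * (t ^ n * (-Real.log t) ^ k)) : ℝ) : ℂ) := by
      intro t ht
      have hneg : ((-1:ℂ)) ^ k * ((-1:ℂ)) ^ k = 1 := by rw [← mul_pow]; norm_num
      simp only [hG]
      push_cast
      rw [neg_pow]
      linear_combination -(f n * z ^ n * (t:ℂ) ^ n * ((Real.log t : ℂ)) ^ k) * hneg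
    rw [setIntegral_congr_fun measurableSet_Ioo h1, MeasureTheory.integral_const_mul]
    congr 1
    rw [show ((-1:ℝ)^k * ((k.factorial:ℝ) / ((n:ℝ)+1)^(k+1)))
        = ∫ t in Set.Ioo (0:ℝ) 1, (-1:ℝ)^k * (t^n * (-Real.log t)^k) from by
      rw [MeasureTheory.integral_const_mul, key_integral n k]]
    exact _root_.integral_ofReal
  rw [intervalIntegral.integral_of_le zero_le_one, MeasureTheory.integral_Ioc_eq_integral_Ioo]
  have h2 : ∫ t in Set.Ioo (0:ℝ) 1, ((Real.log t : ℂ)) ^ k * ∑' n : ℕ, f n * ((t:ℂ) * z) ^ n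
      = ∑' n : ℕ, ∫ t in Set.Ioo (0:ℝ) 1, G n t := by
    rw [show (fun t : ℝ => ((Real.log t : ℂ)) ^ k * ∑' n : ℕ, f n * ((t:ℂ) * z) ^ n)
        = fun t => ∑' n : ℕ, G n t from funext fun t => (tsum_mul_left).symm]
    exact (MeasureTheory.integral_tsum_of_summable_integral_norm hGint hGsum).symm
  rw [h2, ← tsum_mul_left]
  apply tsum_congr
  intro n
  rw [hGval n, hrk]
  have hfac : ((k.factorial : ℂ)) ≠ 0 := Nat.cast_ne_zero.mpr k.factorial_ne_zero
  have hpow : ((n:ℂ) + 1) ^ (k+1) ≠ 0 := pow_ne_zero _ (Nat.cast_add_one_ne_zero n)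
  have hneg : ((-1:ℂ)) ^ k * ((-1:ℂ)) ^ k = 1 := by rw [← mul_pow]; norm_num
  push_cast
  field_simp
  have h12 : ((-1:ℂ)) ^ (k * 2) = 1 := by rw [mul_comm, pow_mul]; norm_num
  ring_nf
  simp only [h12]
  ring
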